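/- Let T⁰, T⁻¹ be finitely generated abelian groups and N : T⁰ → T⁻¹ a homomorphism such that N ⊗ ℚ : T⁰ ⊗ ℚ → T⁻¹ ⊗ ℚ is injective. Set D⁰ = T⁰ ⊗_ℤ K₀ and D⁻¹ = T⁻¹ ⊗_ℤ K₀, with σ acting as 1⊗σ and N extended K₀-linearly. Then the assignment u ↦ class of (0, u⊗1) induces an isomorphism of ℚ_p-vector spaces (T⁻¹/N T⁰) ⊗_ℤ ℚ_p → {(x,y) ∈ D⁰ ⊕ D⁻¹ : N(x) = (σ−1)(y)} / {((σ−1)(z), N(z)) : z ∈ D⁰}. -/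

import Mathlib

open TensorProduct

/-- `K₀`: the fraction field of the ring of `p`-typical Witt vectors of the finite
field `𝔽_q` with `q = p^f` elements. -/
abbrev K0 (p f : ℕ) [Fact p.Prime] : Type :=
  FractionRing (WittVector p (GaloisField p f))

/-- `ℚ_p`, realized as the fraction field of `W(𝔽_p)`. -/
abbrev Qp (p : ℕ) [Fact p.Prime] : Type :=
  FractionRing (WittVector p (ZMod p))

/-- The Frobenius `σ` of `K₀`, induced by the Witt vector Frobenius of `W(𝔽_q)`. -/
noncomputable def sigma (p f : ℕ) [Fact p.Prime] : K0 p f ≃+* K0 p f :=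
  WittVector.FractionRing.frobenius p (GaloisField p f)

/-- The embedding `ℚ_p → K₀` induced by `W(𝔽_p) → W(𝔽_q)`. -/
noncomputable def iota (p f : ℕ) [Fact p.Prime] : Qp p →+* K0 p f :=
  IsFractionRing.lift
    (g := (algebraMap (WittVector p (GaloisField p f)) (K0 p f)).comp
      (WittVector.map (algebraMap (ZMod p) (GaloisField p f))))
    (by
      rw [RingHom.coe_comp]
      exact Function.Injective.comp (IsFractionRing.injective _ _)
        (WittVector.map_injective _ (RingHom.injective _)))

/-- `σ` as a `ℤ`-linear endomorphism of `K₀`. -/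
noncomputable def sigmaLin (p f : ℕ) [Fact p.Prime] : K0 p f →ₗ[ℤ] K0 p f :=
  AddMonoidHom.toIntLinearMap (sigma p f).toRingHom.toAddMonoidHom

/-- `ι : ℚ_p → K₀` as a `ℤ`-linear map. -/
noncomputable def iotaLin (p f : ℕ) [Fact p.Prime] : Qp p →ₗ[ℤ] K0 p f :=
  AddMonoidHom.toIntLinearMap (iota p f).toAddMonoidHom

/-- The `ℤ`-linear endomorphism `a ↦ pⁱ·σ(a)` of `K₀` (with `pⁱ ∈ K₀` the `zpow`). -/
noncomputable def twist (p f : ℕ) [Fact p.Prime] (i : ℤ) : K0 p f →ₗ[ℤ] K0 p f :=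
  ((p : K0 p f) ^ i) • sigmaLin p f

section Stmt7

variable (p f : ℕ) [Fact p.Prime] (T0 Tm1 : Type) [AddCommGroup T0] [AddCommGroup Tm1]
  (N : T0 →+ Tm1)

/-- The group of cocycles `{(x,y) ∈ D⁰ ⊕ D⁻¹ : N(x) = (σ−1)(y)}`. -/
noncomputable def cocycles :
    AddSubgroup ((T0 ⊗[ℤ] K0 p f) × (Tm1 ⊗[ℤ] K0 p f)) where
  carrier := {z | TensorProduct.map N.toIntLinearMap (LinearMap.id : K0 p f →ₗ[ℤ] K0 p f) z.1
      = TensorProduct.map (LinearMap.id : Tm1 →ₗ[ℤ] Tm1) (sigmaLin p f) z.2 - z.2}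
  zero_mem' := by simp
  add_mem' := by
    intro a b ha hb
    simp only [Set.mem_setOf_eq, Prod.fst_add, Prod.snd_add, map_add] at *
    rw [ha, hb]; abel
  neg_mem' := by
    intro a ha
    simp only [Set.mem_setOf_eq, Prod.fst_neg, Prod.snd_neg, map_neg] at *
    rw [ha]; abel

/-- The coboundary map `z ↦ ((σ−1)(z), N(z))`. -/
noncomputable def coboundary :
    (T0 ⊗[ℤ] K0 p f) →+ (T0 ⊗[ℤ] K0 p f) × (Tm1 ⊗[ℤ] K0 p f) where
  toFun z := (TensorProduct.map (LinearMap.id : T0 →ₗ[ℤ] T0) (sigmaLin p f) z - z,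
    TensorProduct.map N.toIntLinearMap (LinearMap.id : K0 p f →ₗ[ℤ] K0 p f) z)
  map_zero' := by simp
  map_add' a b := by
    simp only [map_add, Prod.mk_add_mk]
    exact Prod.ext (by abel) rfl

end Stmt7
namespace S7

open WittVector

variable (p f : ℕ) [Fact p.Prime]

local notation "𝕎q" => WittVector p (GaloisField p f)
local notation "𝕎p" => WittVector p (ZMod p)
local notation "φq" => algebraMap (ZMod p) (GaloisField p f)
local notation "Aq" => algebraMap (WittVector p (GaloisField p f)) (K0 p f)
local notation "Ap" => algebraMap (WittVector p (ZMod p)) (Qp p)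

lemma iota_injective : Function.Injective (iota p f) := (iota p f).injective

lemma iota_algebraMap (x : 𝕎p) :
    iota p f (Ap x) = Aq (WittVector.map φq x) :=
  IsFractionRing.lift_algebraMap _ _

lemma sigma_algebraMap (x : 𝕎q) :
    sigma p f (Aq x) = Aq (WittVector.frobenius x) := by
  exact IsFractionRing.ringEquivOfRingEquiv_algebraMap
    (frobeniusEquiv p (GaloisField p f)) x

lemma frobenius_map (x : 𝕎p) :
    WittVector.frobenius (WittVector.map φq x) = WittVector.map φq x := by
  ext n
  simp [WittVector.coeff_frobenius_charP, WittVector.map_coeff, ← map_pow, ZMod.pow_card]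

lemma sigma_iota (c : Qp p) : sigma p f (iota p f c) = iota p f c := by
  have : ((sigma p f : K0 p f →+* K0 p f).comp (iota p f)) = iota p f := by
    apply IsLocalization.ringHom_ext (nonZeroDivisors 𝕎p)
    ext x
    simp [iota_algebraMap, sigma_algebraMap, frobenius_map]
  exact DFunLike.congr_fun this c

lemma frobenius_iterate (hf : f ≠ 0) (x : 𝕎q) :
    (WittVector.frobenius)^[f] x = x := by
  haveI : Fintype (GaloisField p f) := Fintype.ofFinite _
  ext n
  rw [WittVector.iterate_frobenius_coeff]
  have h := FiniteField.pow_card (x.coeff n)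
  rwa [← Nat.card_eq_fintype_card, GaloisField.card p f hf] at h

lemma sigma_iterate (hf : f ≠ 0) (a : K0 p f) : (sigma p f)^[f] a = a := by
  have key : ∀ (n : ℕ) (x : 𝕎q), (sigma p f)^[n] (Aq x) = Aq ((WittVector.frobenius)^[n] x) := by
    intro n
    induction n with
    | zero => simp
    | succ n ih =>
      intro x
      rw [Function.iterate_succ_apply, Function.iterate_succ_apply, sigma_algebraMap, ih]
  have hhom : ∀ (n : ℕ) (a b : K0 p f),
      (sigma p f)^[n] (a / b) = (sigma p f)^[n] a / (sigma p f)^[n] b := by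
    intro n
    induction n with
    | zero => intro a b; simp
    | succ n ih =>
      intro a b
      rw [Function.iterate_succ_apply, Function.iterate_succ_apply,
        Function.iterate_succ_apply, map_div₀, ih]
  obtain ⟨x, y, hy, rfl⟩ := IsFractionRing.div_surjective (A := 𝕎q) a
  rw [hhom, key, key, frobenius_iterate p f hf, frobenius_iterate p f hf]

lemma zmod_fixed (x : GaloisField p f) (hx : x ^ p = x) :
    ∃ a : ZMod p, φq a = x := by
  classical
  by_contra hc
  push_neg at hc
  have hp1 : 1 < p := (Fact.out : p.Prime).one_lt
  set g : Polynomial (GaloisField p f) := Polynomial.X ^ p - Polynomial.X with hg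
  have hg0 : g ≠ 0 := FiniteField.X_pow_card_sub_X_ne_zero _ hp1
  have hdeg : g.natDegree = p := FiniteField.X_pow_card_sub_X_natDegree_eq _ hp1
  have hinj : Function.Injective (φq) := (algebraMap (ZMod p) (GaloisField p f)).injective
  set S : Finset (GaloisField p f) := Finset.image (φq) Finset.univ with hS
  have hcard : S.card = p := by
    rw [hS, Finset.card_image_of_injective _ hinj, Finset.card_univ, ZMod.card]
  have hsub : insert x S ⊆ g.roots.toFinset := by
    intro y hy
    rw [Multiset.mem_toFinset, Polynomial.mem_roots hg0]
    rcases Finset.mem_insert.mp hy with rfl | hyS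
    · simp [hg, Polynomial.eval_sub, Polynomial.eval_pow, Polynomial.eval_X, hx]
    · obtain ⟨a, _, rfl⟩ := Finset.mem_image.mp hyS
      simp [hg, Polynomial.eval_sub, Polynomial.eval_pow, Polynomial.eval_X, ← map_pow,
        ZMod.pow_card]
  have hxS : x ∉ S := by
    intro hxS
    obtain ⟨a, _, rfl⟩ := Finset.mem_image.mp hxS
    exact hc a rfl
  have h1 : (insert x S).card = p + 1 := by rw [Finset.card_insert_of_notMem hxS, hcard]
  have h2 : g.roots.toFinset.card ≤ p := by
    calc g.roots.toFinset.card ≤ Multiset.card g.roots := Multiset.toFinset_card_le _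
    _ ≤ g.natDegree := Polynomial.card_roots' g
    _ = p := hdeg
  have := Finset.card_le_card hsub
  omega

lemma witt_fixed (x : 𝕎q) (hx : WittVector.frobenius x = x) :
    ∃ y : 𝕎p, WittVector.map φq y = x := by
  have hcoeff : ∀ n, ∃ a : ZMod p, φq a = x.coeff n := by
    intro n
    apply zmod_fixed
    have := congrArg (fun z => WittVector.coeff z n) hx
    simpa [WittVector.coeff_frobenius_charP] using this
  choose a ha using hcoeff
  refine ⟨WittVector.mk p a, ?_⟩
  ext n
  simp [WittVector.map_coeff, WittVector.coeff_mk, ha]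

lemma k0_fixed (a : K0 p f) (ha : sigma p f a = a) : ∃ c : Qp p, iota p f c = a := by
  rcases eq_or_ne a 0 with rfl | ha0
  · exact ⟨0, map_zero _⟩
  obtain ⟨x, y, hy, hxy⟩ := IsFractionRing.div_surjective (A := 𝕎q) a
  have hy0 : y ≠ 0 := nonZeroDivisors.ne_zero hy
  obtain ⟨m, u, hu⟩ := WittVector.exists_eq_pow_p_mul' y hy0
  have hAy : Aq y ≠ 0 := IsFractionRing.to_map_ne_zero_of_mem_nonZeroDivisors hy
  have hax : Aq x = a * Aq y := by
    rw [← hxy, div_mul_cancel₀ _ hAy]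
  set w : 𝕎q := x * ↑u⁻¹ with hw
  have hpK : (p : K0 p f) ≠ 0 := WittVector.FractionRing.p_nonzero p (GaloisField p f)
  have hAw : Aq w = a * (p : K0 p f) ^ m := by
    have : Aq ↑u * Aq ↑u⁻¹ = 1 := by
      rw [← map_mul]; simp
    calc Aq w = Aq x * Aq ↑u⁻¹ := by rw [hw, map_mul]
    _ = a * Aq y * Aq ↑u⁻¹ := by rw [hax]
    _ = a * (Aq ((p : 𝕎q) ^ m) * (Aq ↑u * Aq ↑u⁻¹)) := by rw [hu, map_mul]; ring
    _ = a * (p : K0 p f) ^ m := by rw [this, mul_one, map_pow, map_natCast]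
  have hfixw : WittVector.frobenius w = w := by
    apply IsFractionRing.injective 𝕎q (K0 p f)
    rw [← sigma_algebraMap, hAw, map_mul, ha, map_pow, map_natCast]
  obtain ⟨y', hy'⟩ := witt_fixed p f w hfixw
  refine ⟨Ap y' / (p : Qp p) ^ m, ?_⟩
  rw [map_div₀, iota_algebraMap, hy', map_pow, map_natCast, hAw]
  field_simp

lemma natCast_K0_ne_zero (n : ℕ) (hn : n ≠ 0) : (n : K0 p f) ≠ 0 := by
  induction n using Nat.strong_induction_on with
  | _ n ih =>
    by_cases hpn : p ∣ n
    · obtain ⟨m, rfl⟩ := hpn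
      have hm : m ≠ 0 := by rintro rfl; simp at hn
      have hmlt : m < p * m := by
        have := (Fact.out : p.Prime).one_lt
        calc m = 1 * m := (one_mul m).symm
        _ < p * m := (Nat.mul_lt_mul_right (Nat.pos_of_ne_zero hm)).mpr this
      push_cast
      exact mul_ne_zero (WittVector.FractionRing.p_nonzero p (GaloisField p f)) (ih m hmlt hm)
    · intro h0
      have : (n : 𝕎q) = 0 := by
        apply IsFractionRing.injective 𝕎q (K0 p f)
        rw [map_natCast, h0, map_zero]
      have : (n : GaloisField p f) = 0 := by
        have := congrArg (WittVector.constantCoeff) this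
        simpa using this
      exact hpn ((CharP.cast_eq_zero_iff (GaloisField p f) p n).mp this)

end S7
set_option synthInstance.maxHeartbeats 800000
set_option maxHeartbeats 1000000
namespace S7

section Operators

variable (p f : ℕ) [Fact p.Prime]

/-- `σ` as an endomorphism, for powers. -/
noncomputable abbrev sE : Module.End ℤ (K0 p f) := sigmaLin p f

lemma sE_pow_apply (n : ℕ) (a : K0 p f) : (sE p f ^ n) a = (sigma p f)^[n] a := by
  rw [Module.End.pow_apply]
  rfl

lemma sigma_inv_f_mul (x : K0 p f) :
    sigma p f ((f : K0 p f)⁻¹ * x) = (f : K0 p f)⁻¹ * sigma p f x := by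
  rw [map_mul, map_inv₀, map_natCast]

/-- The averaging projection `P = f⁻¹ ∑ σ^i`. -/
noncomputable def Pav : K0 p f →ₗ[ℤ] K0 p f :=
  ((f : K0 p f)⁻¹) • (∑ i ∈ Finset.range f, sE p f ^ i)

/-- `G` with `(σ-1)∘G = G∘(σ-1) = 1 - P`. -/
noncomputable def Gav : K0 p f →ₗ[ℤ] K0 p f :=
  -(((f : K0 p f)⁻¹) • (∑ i ∈ Finset.range f, ∑ j ∈ Finset.range i, sE p f ^ j))

lemma Pav_apply (a : K0 p f) :
    Pav p f a = (f : K0 p f)⁻¹ * ∑ i ∈ Finset.range f, (sigma p f)^[i] a := by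
  simp [Pav, LinearMap.sum_apply, sE_pow_apply, smul_eq_mul]

lemma Gav_apply (a : K0 p f) :
    Gav p f a
      = -((f : K0 p f)⁻¹ * ∑ i ∈ Finset.range f, ∑ j ∈ Finset.range i, (sigma p f)^[j] a) := by
  simp [Gav, LinearMap.sum_apply, sE_pow_apply, smul_eq_mul]

variable (hf : f ≠ 0)

include hf in
lemma fK_ne_zero : (f : K0 p f) ≠ 0 := natCast_K0_ne_zero p f f hf

include hf in
lemma sigma_Pav (a : K0 p f) : sigma p f (Pav p f a) = Pav p f a := by
  rw [Pav_apply, sigma_inv_f_mul, map_sum]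
  congr 1
  simp_rw [← Function.iterate_succ_apply' (sigma p f)]
  obtain ⟨m, rfl⟩ : ∃ m, f = m + 1 := ⟨f - 1, (Nat.succ_pred_eq_of_ne_zero hf).symm⟩
  rw [Finset.sum_range_succ, Finset.sum_range_succ']
  congr 1
  simpa using sigma_iterate p (m + 1) hf a

include hf in
lemma Pav_iota (c : Qp p) : Pav p f (iota p f c) = iota p f c := by
  have hiter : ∀ i, (sigma p f)^[i] (iota p f c) = iota p f c := by
    intro i
    induction i with
    | zero => rfl
    | succ n ih => rw [Function.iterate_succ_apply', ih, sigma_iota]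
  rw [Pav_apply]
  simp_rw [hiter]
  rw [Finset.sum_const, Finset.card_range, nsmul_eq_mul, ← mul_assoc,
    inv_mul_cancel₀ (fK_ne_zero p f hf), one_mul]

lemma sum_iter_sub (a : K0 p f) (i : ℕ) :
    ∑ j ∈ Finset.range i, (sigma p f)^[j + 1] a - ∑ j ∈ Finset.range i, (sigma p f)^[j] a
      = (sigma p f)^[i] a - a := by
  rw [← Finset.sum_sub_distrib, Finset.sum_range_sub (fun j => (sigma p f)^[j] a)]
  rfl

lemma sum_sum_iter_sub (a : K0 p f) :
    ∑ i ∈ Finset.range f, ∑ j ∈ Finset.range i, (sigma p f)^[j + 1] a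
      - ∑ i ∈ Finset.range f, ∑ j ∈ Finset.range i, (sigma p f)^[j] a
      = ∑ i ∈ Finset.range f, (sigma p f)^[i] a - (f : K0 p f) * a := by
  rw [← Finset.sum_sub_distrib]
  simp_rw [sum_iter_sub]
  rw [Finset.sum_sub_distrib, Finset.sum_const, Finset.card_range, nsmul_eq_mul]

include hf in
lemma sigma_Gav_sub (a : K0 p f) :
    sigma p f (Gav p f a) - Gav p f a = a - Pav p f a := by
  have e1 : sigma p f (Gav p f a)
      = -((f : K0 p f)⁻¹
          * ∑ i ∈ Finset.range f, ∑ j ∈ Finset.range i, (sigma p f)^[j + 1] a) := by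
    rw [Gav_apply, map_neg, sigma_inv_f_mul, map_sum]
    simp_rw [map_sum, ← Function.iterate_succ_apply' (sigma p f)]
  rw [e1, Gav_apply, Pav_apply]
  have e2 := sum_sum_iter_sub p f a
  have hfi : (f : K0 p f)⁻¹ * (f : K0 p f) = 1 := inv_mul_cancel₀ (fK_ne_zero p f hf)
  linear_combination (-(f : K0 p f)⁻¹) * e2 + a * hfi

include hf in
lemma Gav_sigma_sub (a : K0 p f) :
    Gav p f (sigma p f a) - Gav p f a = a - Pav p f a := by
  have e1 : Gav p f (sigma p f a)
      = -((f : K0 p f)⁻¹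
          * ∑ i ∈ Finset.range f, ∑ j ∈ Finset.range i, (sigma p f)^[j + 1] a) := by
    rw [Gav_apply]
    simp_rw [← Function.iterate_succ_apply (sigma p f)]
  rw [e1, Gav_apply, Pav_apply]
  have e2 := sum_sum_iter_sub p f a
  have hfi : (f : K0 p f)⁻¹ * (f : K0 p f) = 1 := inv_mul_cancel₀ (fK_ne_zero p f hf)
  linear_combination (-(f : K0 p f)⁻¹) * e2 + a * hfi

end Operators

end S7
namespace S7

section Retraction

variable (p f : ℕ) [Fact p.Prime]
variable (hf : f ≠ 0)

noncomputable def P0fun (a : K0 p f) : Qp p :=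
  Classical.choose (k0_fixed p f (Pav p f a) (sigma_Pav p f hf a))

lemma iota_P0fun (a : K0 p f) : iota p f (P0fun p f hf a) = Pav p f a :=
  Classical.choose_spec (k0_fixed p f (Pav p f a) (sigma_Pav p f hf a))

noncomputable def P0lin : K0 p f →ₗ[ℤ] Qp p :=
  AddMonoidHom.toIntLinearMap
    { toFun := P0fun p f hf
      map_zero' := iota_injective p f (by rw [iota_P0fun, map_zero, map_zero])
      map_add' := fun a b => iota_injective p f
        (by rw [iota_P0fun, map_add, map_add, iota_P0fun, iota_P0fun]) }

include hf in
lemma iota_P0lin (a : K0 p f) : iotaLin p f (P0lin p f hf a) = Pav p f a :=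
  iota_P0fun p f hf a

include hf in
lemma P0lin_iota (c : Qp p) : P0lin p f hf (iotaLin p f c) = c :=
  iota_injective p f (by
    rw [show iota p f (P0lin p f hf (iotaLin p f c)) = iotaLin p f (P0lin p f hf (iotaLin p f c))
      from rfl, iota_P0lin]
    exact Pav_iota p f hf c)

include hf in
lemma comp_iP0 : iotaLin p f ∘ₗ P0lin p f hf = Pav p f :=
  LinearMap.ext (iota_P0lin p f hf)

include hf in
lemma comp_P0i : P0lin p f hf ∘ₗ iotaLin p f = LinearMap.id :=
  LinearMap.ext (P0lin_iota p f hf)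

lemma comp_si : sigmaLin p f ∘ₗ iotaLin p f = iotaLin p f :=
  LinearMap.ext fun c => sigma_iota p f c

include hf in
lemma comp_sG : sigmaLin p f ∘ₗ Gav p f - Gav p f = LinearMap.id - Pav p f :=
  LinearMap.ext fun a => sigma_Gav_sub p f hf a

include hf in
lemma comp_Gs : Gav p f ∘ₗ sigmaLin p f - Gav p f = LinearMap.id - Pav p f :=
  LinearMap.ext fun a => Gav_sigma_sub p f hf a

end Retraction

section TensorLemmas

variable (p f : ℕ) [Fact p.Prime] (M : Type) [AddCommGroup M]
variable (hf : f ≠ 0)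

include hf in
lemma jT_injective : Function.Injective (LinearMap.lTensor M (iotaLin p f)) := by
  have h : (LinearMap.lTensor M (P0lin p f hf)).comp (LinearMap.lTensor M (iotaLin p f))
      = LinearMap.id := by
    rw [← LinearMap.lTensor_comp, comp_P0i, LinearMap.lTensor_id]
  intro x y hxy
  have h2 := congrArg (LinearMap.lTensor M (P0lin p f hf)) hxy
  rwa [← LinearMap.comp_apply, ← LinearMap.comp_apply, h, LinearMap.id_apply,
    LinearMap.id_apply] at h2

include hf in
lemma fixed_eq_Pav (z : M ⊗[ℤ] K0 p f) (hz : LinearMap.lTensor M (sigmaLin p f) z = z) :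
    LinearMap.lTensor M (Pav p f) z = z := by
  have h : LinearMap.lTensor M (Gav p f ∘ₗ sigmaLin p f - Gav p f) z
      = LinearMap.lTensor M (LinearMap.id - Pav p f) z := by rw [comp_Gs p f hf]
  rw [LinearMap.lTensor_sub, LinearMap.lTensor_sub, LinearMap.lTensor_comp,
    LinearMap.lTensor_id] at h
  simp only [LinearMap.sub_apply, LinearMap.comp_apply, LinearMap.id_apply] at h
  rw [hz, sub_self] at h
  exact (sub_eq_zero.mp h.symm).symm

include hf in
lemma fixed_mem_range (z : M ⊗[ℤ] K0 p f)
    (hz : LinearMap.lTensor M (sigmaLin p f) z = z) :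
    ∃ t : M ⊗[ℤ] Qp p, LinearMap.lTensor M (iotaLin p f) t = z :=
  ⟨LinearMap.lTensor M (P0lin p f hf) z, by
    rw [← LinearMap.comp_apply, ← LinearMap.lTensor_comp, comp_iP0]
    exact fixed_eq_Pav p f M hf z hz⟩

include hf in
lemma tensor_decomp (z : M ⊗[ℤ] K0 p f) :
    z = LinearMap.lTensor M (iotaLin p f) (LinearMap.lTensor M (P0lin p f hf) z)
      + (LinearMap.lTensor M (sigmaLin p f) (LinearMap.lTensor M (Gav p f) z)
        - LinearMap.lTensor M (Gav p f) z) := by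
  have h : LinearMap.lTensor M (sigmaLin p f ∘ₗ Gav p f - Gav p f) z
      = LinearMap.lTensor M (LinearMap.id - Pav p f) z := by rw [comp_sG p f hf]
  rw [LinearMap.lTensor_sub, LinearMap.lTensor_sub, LinearMap.lTensor_comp,
    LinearMap.lTensor_id] at h
  simp only [LinearMap.sub_apply, LinearMap.comp_apply, LinearMap.id_apply] at h
  rw [← LinearMap.comp_apply, ← LinearMap.lTensor_comp, comp_iP0, h]
  abel

lemma sT_jT (t : M ⊗[ℤ] Qp p) :
    LinearMap.lTensor M (sigmaLin p f) (LinearMap.lTensor M (iotaLin p f) t)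
      = LinearMap.lTensor M (iotaLin p f) t := by
  rw [← LinearMap.comp_apply, ← LinearMap.lTensor_comp, comp_si]

end TensorLemmas

section MapComm

variable {T T' V W : Type} [AddCommGroup T] [AddCommGroup T'] [AddCommGroup V] [AddCommGroup W]

lemma map_comm (L : T →ₗ[ℤ] T') (g : V →ₗ[ℤ] W) :
    (TensorProduct.map L LinearMap.id).comp (TensorProduct.map LinearMap.id g)
      = (TensorProduct.map LinearMap.id g).comp (TensorProduct.map L LinearMap.id) := by
  rw [← TensorProduct.map_comp, ← TensorProduct.map_comp]
  simp

end MapComm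

section Injectivity

variable (p f : ℕ) [Fact p.Prime]

lemma charZero_K0 : CharZero (K0 p f) :=
  charZero_of_inj_zero fun n hn => by
    by_contra h
    exact natCast_K0_ne_zero p f n h hn

lemma tensor_map_injective {T T' : Type} [AddCommGroup T] [AddCommGroup T'] (L : T →ₗ[ℤ] T')
    (hL : Function.Injective (TensorProduct.map L (LinearMap.id : ℚ →ₗ[ℤ] ℚ))) :
    Function.Injective (TensorProduct.map L (LinearMap.id : K0 p f →ₗ[ℤ] K0 p f)) := by
  haveI := charZero_K0 p f
  have hLbi : Function.Injective (L.baseChange ℚ) := by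
    have key : ((L.baseChange ℚ).restrictScalars ℤ) ∘ₗ (TensorProduct.comm ℤ T ℚ).toLinearMap
        = (TensorProduct.comm ℤ T' ℚ).toLinearMap ∘ₗ TensorProduct.map L LinearMap.id := by
      apply TensorProduct.ext'
      intro t q
      rfl
    intro x y hxy
    obtain ⟨x', rfl⟩ := (TensorProduct.comm ℤ T ℚ).surjective x
    obtain ⟨y', rfl⟩ := (TensorProduct.comm ℤ T ℚ).surjective y
    have hx := DFunLike.congr_fun key x'
    have hy := DFunLike.congr_fun key y'
    change (L.baseChange ℚ) ((TensorProduct.comm ℤ T ℚ) x')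
      = (TensorProduct.comm ℤ T' ℚ) (TensorProduct.map L LinearMap.id x') at hx
    change (L.baseChange ℚ) ((TensorProduct.comm ℤ T ℚ) y')
      = (TensorProduct.comm ℤ T' ℚ) (TensorProduct.map L LinearMap.id y') at hy
    have : (TensorProduct.comm ℤ T' ℚ) (TensorProduct.map L LinearMap.id x')
        = (TensorProduct.comm ℤ T' ℚ) (TensorProduct.map L LinearMap.id y') := by
      rw [← hx, ← hy]; exact hxy
    exact congrArg _ (hL ((TensorProduct.comm ℤ T' ℚ).injective this))
  have hbig : Function.Injective (LinearMap.lTensor (K0 p f) (L.baseChange ℚ)) :=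
    Module.Flat.lTensor_preserves_injective_linearMap (M := K0 p f) (L.baseChange ℚ) hLbi
  have key2 : (LinearEquiv.restrictScalars ℤ
          (TensorProduct.AlgebraTensorModule.cancelBaseChange ℤ ℚ ℚ (K0 p f) T').symm).toLinearMap
        ∘ₗ (TensorProduct.comm ℤ T' (K0 p f)).toLinearMap ∘ₗ TensorProduct.map L LinearMap.id
      = (LinearMap.restrictScalars ℤ (LinearMap.lTensor (K0 p f) (L.baseChange ℚ)))
        ∘ₗ (LinearEquiv.restrictScalars ℤ
          (TensorProduct.AlgebraTensorModule.cancelBaseChange ℤ ℚ ℚ (K0 p f) T).symm).toLinearMap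
        ∘ₗ (TensorProduct.comm ℤ T (K0 p f)).toLinearMap := by
    apply TensorProduct.ext'
    intro t a
    rfl
  intro x y hxy
  have hx := DFunLike.congr_fun key2 x
  have hy := DFunLike.congr_fun key2 y
  simp only [LinearMap.coe_comp, Function.comp_apply, LinearMap.coe_restrictScalars,
    LinearEquiv.coe_coe] at hx hy
  have h3 : (LinearMap.lTensor (K0 p f) (L.baseChange ℚ))
        ((LinearEquiv.restrictScalars ℤ
            (TensorProduct.AlgebraTensorModule.cancelBaseChange ℤ ℚ ℚ (K0 p f) T).symm)
          ((TensorProduct.comm ℤ T (K0 p f)) x))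
      = (LinearMap.lTensor (K0 p f) (L.baseChange ℚ))
        ((LinearEquiv.restrictScalars ℤ
            (TensorProduct.AlgebraTensorModule.cancelBaseChange ℤ ℚ ℚ (K0 p f) T).symm)
          ((TensorProduct.comm ℤ T (K0 p f)) y)) := by
    exact hx.symm.trans ((congrArg (fun z => (LinearEquiv.restrictScalars ℤ
      (TensorProduct.AlgebraTensorModule.cancelBaseChange ℤ ℚ ℚ (K0 p f) T').symm)
      (TensorProduct.comm ℤ T' (K0 p f) z)) hxy).trans hy)
  have h5 := hbig h3
  exact (TensorProduct.comm ℤ T (K0 p f)).injective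
    ((LinearEquiv.restrictScalars ℤ
        (TensorProduct.AlgebraTensorModule.cancelBaseChange ℤ ℚ ℚ (K0 p f) T).symm).injective h5)

end Injectivity

end S7

/-- for `N : T⁰ → T⁻¹` with `N ⊗ ℚ` injective, the assignment
`u ↦ class of (0, u⊗1)` induces an isomorphism of `ℚ_p`-vector spaces
`(T⁻¹/N T⁰) ⊗ ℚ_p ≅ {(x,y) : N(x) = (σ−1)(y)}/{((σ−1)z, Nz)}` (the `ℚ_p`-structure being
encoded by the formula `mk u ⊗ c ↦ class of (0, u ⊗ ι(c))` on simple tensors). -/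
theorem quotient_tensor_Qp_equiv_H1 (p f : ℕ) [Fact p.Prime] (hf : f ≠ 0)
    (T0 Tm1 : Type) [AddCommGroup T0] [AddCommGroup Tm1]
    [AddGroup.FG T0] [AddGroup.FG Tm1] (N : T0 →+ Tm1)
    (hN : Function.Injective
      (TensorProduct.map N.toIntLinearMap (LinearMap.id : ℚ →ₗ[ℤ] ℚ))) :
    ∃ φ : ((Tm1 ⧸ N.range) ⊗[ℤ] Qp p) ≃+
        (cocycles p f T0 Tm1 N ⧸
          ((coboundary p f T0 Tm1 N).range.addSubgroupOf (cocycles p f T0 Tm1 N))),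
      ∀ (u : Tm1) (c : Qp p)
        (hu : ((0 : T0 ⊗[ℤ] K0 p f), u ⊗ₜ[ℤ] iota p f c) ∈ cocycles p f T0 Tm1 N),
        φ ((QuotientAddGroup.mk u : Tm1 ⧸ N.range) ⊗ₜ[ℤ] c)
          = QuotientAddGroup.mk ⟨((0 : T0 ⊗[ℤ] K0 p f), u ⊗ₜ[ℤ] iota p f c), hu⟩ := by
  classical
  -- abbreviations
  let NL : T0 →ₗ[ℤ] Tm1 := N.toIntLinearMap
  let n' : T0 ⊗[ℤ] K0 p f →ₗ[ℤ] Tm1 ⊗[ℤ] K0 p f := TensorProduct.map NL LinearMap.id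
  let nQ : T0 ⊗[ℤ] Qp p →ₗ[ℤ] Tm1 ⊗[ℤ] Qp p := TensorProduct.map NL LinearMap.id
  let jA : T0 ⊗[ℤ] Qp p →ₗ[ℤ] T0 ⊗[ℤ] K0 p f := LinearMap.lTensor T0 (iotaLin p f)
  let jB : Tm1 ⊗[ℤ] Qp p →ₗ[ℤ] Tm1 ⊗[ℤ] K0 p f := LinearMap.lTensor Tm1 (iotaLin p f)
  let sA : T0 ⊗[ℤ] K0 p f →ₗ[ℤ] T0 ⊗[ℤ] K0 p f := LinearMap.lTensor T0 (sigmaLin p f)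
  let sB : Tm1 ⊗[ℤ] K0 p f →ₗ[ℤ] Tm1 ⊗[ℤ] K0 p f := LinearMap.lTensor Tm1 (sigmaLin p f)
  have hn' : Function.Injective n' := S7.tensor_map_injective p f NL hN
  have hmem : ∀ z : (T0 ⊗[ℤ] K0 p f) × (Tm1 ⊗[ℤ] K0 p f),
      z ∈ cocycles p f T0 Tm1 N ↔ n' z.1 = sB z.2 - z.2 := fun z => Iff.rfl
  have hcob : ∀ w : T0 ⊗[ℤ] K0 p f,
      coboundary p f T0 Tm1 N w = (sA w - w, n' w) := fun w => rfl
  -- commutation identities (pointwise)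
  have hNs : ∀ w, n' (sA w) = sB (n' w) := fun w =>
    DFunLike.congr_fun (S7.map_comm NL (sigmaLin p f)) w
  have hNj : ∀ v, n' (jA v) = jB (nQ v) := fun v =>
    DFunLike.congr_fun (S7.map_comm NL (iotaLin p f)) v
  have hNG : ∀ w, n' (LinearMap.lTensor T0 (S7.Gav p f) w)
      = LinearMap.lTensor Tm1 (S7.Gav p f) (n' w) := fun w =>
    DFunLike.congr_fun (S7.map_comm NL (S7.Gav p f)) w
  -- the quotient `D⁻¹ / N D⁰`
  let Qc := (Tm1 ⊗[ℤ] K0 p f) ⧸ LinearMap.range n'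
  let π : (cocycles p f T0 Tm1 N) →+ Qc :=
    ((LinearMap.range n').mkQ.toAddMonoidHom.comp
      ((AddMonoidHom.snd _ _).comp (cocycles p f T0 Tm1 N).subtype))
  let ψ : Tm1 ⊗[ℤ] Qp p →ₗ[ℤ] Qc := (LinearMap.range n').mkQ.comp jB
  let mkL : Tm1 →ₗ[ℤ] (Tm1 ⧸ N.range) := (QuotientAddGroup.mk' N.range).toIntLinearMap
  let q1 : Tm1 ⊗[ℤ] Qp p →ₗ[ℤ] (Tm1 ⧸ N.range) ⊗[ℤ] Qp p := LinearMap.rTensor (Qp p) mkL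
  have hπ : ∀ z : (cocycles p f T0 Tm1 N), π z = Submodule.Quotient.mk z.val.2 :=
    fun z => rfl
  have hψ : ∀ t, ψ t = Submodule.Quotient.mk (jB t) := fun t => rfl
  -- exactness at the Qp level
  have hmkL_surj : Function.Surjective mkL := QuotientAddGroup.mk'_surjective N.range
  have hexact0 : Function.Exact NL mkL := by
    intro y
    constructor
    · intro hy
      have : y ∈ N.range := (QuotientAddGroup.eq_zero_iff y).mp hy
      obtain ⟨x, hx⟩ := this
      exact ⟨x, hx⟩
    · rintro ⟨x, rfl⟩
      exact (QuotientAddGroup.eq_zero_iff _).mpr ⟨x, rfl⟩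
  have hexact : Function.Exact (LinearMap.rTensor (Qp p) NL) q1 :=
    rTensor_exact (Qp p) hexact0 hmkL_surj
  have hnQ_eq : LinearMap.rTensor (Qp p) NL = nQ := rfl
  -- kernels agree
  have hq1k : q1.toAddMonoidHom.ker = ψ.toAddMonoidHom.ker := by
    ext t
    simp only [AddMonoidHom.mem_ker, LinearMap.toAddMonoidHom_coe]
    constructor
    · intro ht
      obtain ⟨v, hv⟩ := (hexact t).mp ht
      rw [hnQ_eq] at hv
      have : jB t = n' (jA v) := by rw [hNj, ← hv]; rfl
      rw [hψ, this]
      exact (Submodule.Quotient.mk_eq_zero _).mpr ⟨jA v, rfl⟩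
    · intro ht
      rw [hψ] at ht
      obtain ⟨w, hw⟩ := (Submodule.Quotient.mk_eq_zero _).mp ht
      -- w : T0 ⊗ K0, n' w = jB t
      have hfix : sA w = w := by
        apply hn'
        rw [hNs w, hw]
        exact S7.sT_jT p f Tm1 t
      obtain ⟨v, hv⟩ := S7.fixed_mem_range p f T0 hf w hfix
      have : jB (nQ v) = jB t := by rw [← hNj, ← hw, ← hv]; rfl
      have htv : nQ v = t := S7.jT_injective p f Tm1 hf this
      apply (hexact t).mpr
      rw [hnQ_eq]
      exact ⟨v, htv⟩
  have hπk : π.ker = (coboundary p f T0 Tm1 N).range.addSubgroupOf (cocycles p f T0 Tm1 N) := by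
    ext z
    obtain ⟨⟨x, y⟩, hz⟩ := z
    rw [AddMonoidHom.mem_ker, AddSubgroup.mem_addSubgroupOf, hπ]
    constructor
    · intro h0
      obtain ⟨w, hw⟩ := (Submodule.Quotient.mk_eq_zero _).mp h0
      have hzc := (hmem (x, y)).mp hz
      have hx : sA w - w = x := by
        apply hn'
        rw [map_sub, hNs w, hw, hzc]
      exact ⟨w, by rw [hcob, hx, hw]⟩
    · rintro ⟨w, hw⟩
      rw [hcob] at hw
      have : n' w = y := congrArg Prod.snd hw
      exact (Submodule.Quotient.mk_eq_zero _).mpr ⟨w, this⟩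
  have hrange : π.range = ψ.toAddMonoidHom.range := by
    ext q
    constructor
    · rintro ⟨⟨⟨x, y⟩, hz⟩, rfl⟩
      refine ⟨LinearMap.lTensor Tm1 (S7.P0lin p f hf) y, ?_⟩
      rw [LinearMap.toAddMonoidHom_coe, hψ, hπ]
      have hzc := (hmem (x, y)).mp hz
      have hdec := S7.tensor_decomp p f Tm1 hf y
      -- `sB (G y) - G y = G (sB y) - G y`
      have hGsw : sB (LinearMap.lTensor Tm1 (S7.Gav p f) y)
            - LinearMap.lTensor Tm1 (S7.Gav p f) y
          = LinearMap.lTensor Tm1 (S7.Gav p f) (sB y)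
            - LinearMap.lTensor Tm1 (S7.Gav p f) y := by
        have h1 : LinearMap.lTensor Tm1 (sigmaLin p f ∘ₗ S7.Gav p f - S7.Gav p f) y
            = LinearMap.lTensor Tm1 (S7.Gav p f ∘ₗ sigmaLin p f - S7.Gav p f) y := by
          rw [S7.comp_sG p f hf, S7.comp_Gs p f hf]
        rw [LinearMap.lTensor_sub, LinearMap.lTensor_sub, LinearMap.lTensor_comp,
          LinearMap.lTensor_comp] at h1
        exact h1
      have hcobd : sB (LinearMap.lTensor Tm1 (S7.Gav p f) y)
            - LinearMap.lTensor Tm1 (S7.Gav p f) y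
          = n' (LinearMap.lTensor T0 (S7.Gav p f) x) := by
        rw [hGsw, hNG, ← map_sub, ← hzc]
      rw [Submodule.Quotient.eq]
      refine ⟨-(LinearMap.lTensor T0 (S7.Gav p f) x), ?_⟩
      have hsum : y = jB (LinearMap.lTensor Tm1 (S7.P0lin p f hf) y)
          + n' (LinearMap.lTensor T0 (S7.Gav p f) x) := by
        rw [← hcobd]; exact hdec
      -- hsum : y = jB t0 + n' (G x)
      show n' (-(LinearMap.lTensor T0 (S7.Gav p f) x))
        = jB (LinearMap.lTensor Tm1 (S7.P0lin p f hf) y) - y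
      rw [map_neg]
      set t0 := (LinearMap.lTensor Tm1 (S7.P0lin p f hf)) y with ht0
      conv_rhs => rw [hsum]
      abel
    · rintro ⟨t, rfl⟩
      have hcoc : ((0 : T0 ⊗[ℤ] K0 p f), jB t) ∈ cocycles p f T0 Tm1 N := by
        rw [hmem]
        rw [map_zero]; exact (sub_eq_zero.mpr (S7.sT_jT p f Tm1 t)).symm
      refine ⟨⟨((0 : T0 ⊗[ℤ] K0 p f), jB t), hcoc⟩, ?_⟩
      rw [hπ, LinearMap.toAddMonoidHom_coe, hψ]
  have hq1surj : Function.Surjective q1.toAddMonoidHom :=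
    LinearMap.rTensor_surjective (Qp p) hmkL_surj
  -- assemble the equivalence
  let e1 := QuotientAddGroup.quotientKerEquivOfSurjective q1.toAddMonoidHom hq1surj
  let e2 := QuotientAddGroup.quotientAddEquivOfEq hq1k
  let e3 := QuotientAddGroup.quotientKerEquivRange ψ.toAddMonoidHom
  let e4 : (ψ.toAddMonoidHom.range : AddSubgroup Qc) ≃+ π.range :=
    AddEquiv.addSubgroupCongr hrange.symm
  let e5 := (QuotientAddGroup.quotientKerEquivRange π).symm
  let e6 := QuotientAddGroup.quotientAddEquivOfEq hπk
  refine ⟨e1.symm.trans (e2.trans (e3.trans (e4.trans (e5.trans e6)))), ?_⟩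
  intro u c hu
  have hq : (QuotientAddGroup.mk u : Tm1 ⧸ N.range) ⊗ₜ[ℤ] c = q1.toAddMonoidHom (u ⊗ₜ c) := rfl
  rw [hq]
  have he1 : e1 (QuotientAddGroup.mk (u ⊗ₜ[ℤ] c)) = q1.toAddMonoidHom (u ⊗ₜ[ℤ] c) := rfl
  rw [← he1]
  rw [AddEquiv.trans_apply, AddEquiv.symm_apply_apply]
  have he2 : e2 (QuotientAddGroup.mk (u ⊗ₜ[ℤ] c)) = QuotientAddGroup.mk (u ⊗ₜ[ℤ] c) := rfl
  rw [AddEquiv.trans_apply, he2]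
  have he3 : e3 (QuotientAddGroup.mk (u ⊗ₜ[ℤ] c))
      = ⟨ψ (u ⊗ₜ[ℤ] c), ⟨u ⊗ₜ[ℤ] c, rfl⟩⟩ := rfl
  rw [AddEquiv.trans_apply, he3]
  set z0 : (cocycles p f T0 Tm1 N) := ⟨((0 : T0 ⊗[ℤ] K0 p f), u ⊗ₜ[ℤ] iota p f c), hu⟩ with hz0
  have hval : ψ (u ⊗ₜ[ℤ] c) = π z0 := rfl
  have he4 : e4 ⟨ψ (u ⊗ₜ[ℤ] c), ⟨u ⊗ₜ[ℤ] c, rfl⟩⟩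
      = ⟨π z0, ⟨z0, rfl⟩⟩ := by
    apply Subtype.ext
    simpa [e4] using hval
  rw [AddEquiv.trans_apply, he4]
  have he5 : e5 ⟨π z0, ⟨z0, rfl⟩⟩ = QuotientAddGroup.mk z0 := by
    apply (QuotientAddGroup.quotientKerEquivRange π).injective
    rw [AddEquiv.apply_symm_apply]
    rfl
  rw [AddEquiv.trans_apply, he5]
  rfl
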